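/- Every tree $T$ on $n$ vertices has dissociation number $\tau(T) \ge \lceil 2n/3 \rceil$. -/
import Mathlib


open SimpleGraph Finset

/-- `F` is contained in `G` as a subgraph (an injective adjacency-preserving map). -/
def containsCopy {α β : Type*} (F : SimpleGraph α) (G : SimpleGraph β) : Prop :=
  ∃ f : α ↪ β, ∀ a b, F.Adj a b → G.Adj (f a) (f b)

/-- For even `d` this is the cocktail party graph `CP_d` (complete graph minus the
perfect matching pairing `2j, 2j+1`); for odd `d` it is the odd cocktail party graph
`L_d = CP_{d-1} ∨ K_1`. -/
def cocktail (d : ℕ) : SimpleGraph (Fin d) :=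
  SimpleGraph.fromRel (fun i j => (i : ℕ) / 2 ≠ (j : ℕ) / 2)

/-- `S` is a dissociation set of `G`: every vertex of `S` has at most one neighbor in `S`. -/
def IsDissocSet {V : Type*} (G : SimpleGraph V) (S : Finset V) : Prop :=
  ∀ v ∈ S, ({u | u ∈ S ∧ G.Adj v u}).ncard ≤ 1

/-- The dissociation number of `G`. -/
noncomputable def dissocNum {V : Type*} [Fintype V] (G : SimpleGraph V) : ℕ :=
  sSup {k | ∃ S : Finset V, IsDissocSet G S ∧ S.card = k}


private lemma ncard_le_one_of_subsingleton {α : Type*} {s : Set α}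
    (h : ∀ a ∈ s, ∀ b ∈ s, a = b) : s.ncard ≤ 1 := by
  rcases Set.eq_empty_or_nonempty s with rfl | ⟨x, hx⟩
  · simp
  · have hsub : s ⊆ {x} := fun a ha => by simp [h a ha x hx]
    calc s.ncard ≤ ({x} : Set α).ncard := Set.ncard_le_ncard hsub (Set.finite_singleton x)
    _ = 1 := Set.ncard_singleton x

private lemma first_edge {V : Type*} {G : SimpleGraph V} {u v y : V} (p : G.Walk u v)
    (hp : p.IsPath) (he : s(u, y) ∈ p.edges) : y = p.getVert 1 := by
  cases p with
  | nil => simp at he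
  | cons h q =>
    simp only [SimpleGraph.Walk.edges_cons, List.mem_cons] at he
    rcases he with he | he
    · have hy := Sym2.congr_right.mp he
      simp [SimpleGraph.Walk.getVert_cons_succ, hy]
    · exfalso
      have hus : u ∈ q.support := q.fst_mem_support_of_mem_edges he
      exact ((SimpleGraph.Walk.cons_isPath_iff h q).1 hp).2 hus

private lemma lemA {V : Type*} {G : SimpleGraph V} (hG : G.IsAcyclic) {u v y : V}
    (p : G.Walk u v) (hp : p.IsPath) (hy : G.Adj u y) (hys : y ∈ p.support) :
    y = p.getVert 1 := by
  classical
  have hq : (p.takeUntil y hys).IsPath := hp.takeUntil hys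
  have hedge : s(y, u) ∈ (p.takeUntil y hys).edges := by
    by_contra hne
    exact hG _ ((SimpleGraph.Walk.cons_isCycle_iff _ hy.symm).2 ⟨hq, hne⟩)
  have : s(u, y) ∈ p.edges := by
    rw [Sym2.eq_swap] at hedge
    exact p.edges_takeUntil_subset hys hedge
  exact first_edge p hp this

private lemma start_unique {V : Type*} {G : SimpleGraph V} (hG : G.IsAcyclic)
    {k : ℕ} (hmax : ∀ (a b : V) (q : G.Walk a b), q.IsPath → q.length ≤ k)
    {u v : V} (p : G.Walk u v) (hp : p.IsPath) (hk : p.length = k)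
    {y : V} (hy : G.Adj u y) : y = p.getVert 1 := by
  by_cases hys : y ∈ p.support
  · exact lemA hG p hp hy hys
  · exfalso
    have hq : (SimpleGraph.Walk.cons hy.symm p).IsPath :=
      (SimpleGraph.Walk.cons_isPath_iff _ _).2 ⟨hp, hys⟩
    have := hmax _ _ _ hq
    simp only [SimpleGraph.Walk.length_cons, hk] at this
    omega

private lemma exists_AD {V : Type*} [Fintype V] [DecidableEq V] {G : SimpleGraph V}
    (hG : G.IsAcyclic) (hne : Nonempty V) :
    ∃ A D : Finset V, D ⊆ A ∧ 2 * A.card ≤ 3 * D.card ∧ A.Nonempty ∧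
      (∀ v ∈ D, ∀ w, G.Adj v w → w ∈ A) ∧
      (∀ v ∈ D, ∀ w₁ ∈ D, ∀ w₂ ∈ D, G.Adj v w₁ → G.Adj v w₂ → w₁ = w₂) := by
  classical
  obtain ⟨x0⟩ := hne
  set P : Set ℕ := {k | ∃ (u v : V) (p : G.Walk u v), p.IsPath ∧ p.length = k} with hP
  have h0 : (0 : ℕ) ∈ P := ⟨x0, x0, SimpleGraph.Walk.nil, by simp, rfl⟩
  have hbd : BddAbove P := by
    refine ⟨Fintype.card V, fun k hk => ?_⟩
    obtain ⟨u, v, p, hp, rfl⟩ := hk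
    exact hp.length_lt.le
  obtain ⟨u, v, p, hp, hk⟩ := Nat.sSup_mem ⟨0, h0⟩ hbd
  set k := sSup P with hkdef
  have hmax : ∀ (a b : V) (q : G.Walk a b), q.IsPath → q.length ≤ k :=
    fun a b q hq => le_csSup hbd ⟨a, b, q, hq, rfl⟩
  rcases Nat.eq_zero_or_pos k with hk0 | hkpos
  · -- no edges at all
    have hnoadj : ∀ x y : V, ¬ G.Adj x y := by
      intro x y hxy
      have hpath : (SimpleGraph.Walk.cons hxy SimpleGraph.Walk.nil).IsPath := by
        simp [SimpleGraph.Walk.cons_isPath_iff, hxy.ne]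
      have := hmax _ _ _ hpath
      simp [hk0] at this
    refine ⟨{u}, {u}, le_refl _, by simp, ⟨u, by simp⟩, ?_, ?_⟩
    · intro a _ w hw; exact absurd hw (hnoadj a w)
    · intro a _ w₁ hw₁ _ _ hadj _; exact absurd hadj (hnoadj a w₁)
  · cases p with
    | nil => rw [← hk] at hkpos; simp at hkpos
    | cons h' p' =>
      rename_i w
      -- h' : G.Adj u w, p' : G.Walk w v
      have hp' : p'.IsPath := hp.of_cons
      have huns : u ∉ p'.support := ((SimpleGraph.Walk.cons_isPath_iff h' p').1 hp).2
      have hgv1 : (SimpleGraph.Walk.cons h' p').getVert 1 = w := by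
        simp [SimpleGraph.Walk.getVert_cons_succ]
      have hu_leaf : ∀ z, G.Adj u z → z = w := by
        intro z hz
        have := start_unique hG hmax (SimpleGraph.Walk.cons h' p') hp hk hz
        rwa [hgv1] at this
      by_cases hcase : ∃ y, G.Adj w y ∧ y ≠ u ∧ y ∉ p'.support
      · obtain ⟨y, hwy, hyu, hysup⟩ := hcase
        have hq : (SimpleGraph.Walk.cons hwy.symm p').IsPath :=
          (SimpleGraph.Walk.cons_isPath_iff _ _).2 ⟨hp', hysup⟩
        have hqlen : (SimpleGraph.Walk.cons hwy.symm p').length = k := by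
          rw [SimpleGraph.Walk.length_cons]
          rw [← hk, SimpleGraph.Walk.length_cons]
        have hy_leaf : ∀ z, G.Adj y z → z = w := by
          intro z hz
          have := start_unique hG hmax (SimpleGraph.Walk.cons hwy.symm p') hq hqlen hz
          simpa [SimpleGraph.Walk.getVert_cons_succ] using this
        refine ⟨{w, u, y}, {u, y}, ?_, ?_, ⟨w, by simp⟩, ?_, ?_⟩
        · intro a ha; simp at ha ⊢; tauto
        · have hcard2 : ({u, y} : Finset V).card = 2 := Finset.card_pair hyu.symm
          have hcard3 : ({w, u, y} : Finset V).card ≤ 3 :=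
            (Finset.card_insert_le _ _).trans (by
              simpa using Nat.add_le_add_right (Finset.card_insert_le u {y}) 1)
          omega
        · intro a ha z hz
          simp only [Finset.mem_insert, Finset.mem_singleton] at ha
          rcases ha with rfl | rfl
          · have := hu_leaf z hz; simp [this]
          · have := hy_leaf z hz; simp [this]
        · intro a ha w₁ h₁ w₂ h₂ hadj₁ hadj₂
          simp only [Finset.mem_insert, Finset.mem_singleton] at ha h₁ h₂
          have key : ∀ b ∈ ({u, y} : Finset V), ∀ c, G.Adj b c → c = w := by
            intro b hb c hc
            simp only [Finset.mem_insert, Finset.mem_singleton] at hb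
            rcases hb with rfl | rfl
            · exact hu_leaf c hc
            · exact hy_leaf c hc
          exfalso
          have hw₁ : w₁ = w := by
            rcases ha with rfl | rfl
            · exact hu_leaf w₁ hadj₁
            · exact hy_leaf w₁ hadj₁
          rcases h₁ with rfl | rfl
          · exact (G.ne_of_adj h') hw₁
          · exact (G.ne_of_adj hwy) hw₁.symm
      · push_neg at hcase
        have hw_nb : ∀ z, G.Adj w z → z = u ∨ z = p'.getVert 1 := by
          intro z hz
          by_cases hzu : z = u
          · exact Or.inl hzu
          · exact Or.inr (lemA hG p' hp' hz (hcase z hz hzu))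
        refine ⟨{w, u, p'.getVert 1}, {w, u}, ?_, ?_, ⟨w, by simp⟩, ?_, ?_⟩
        · intro a ha; simp at ha ⊢; tauto
        · have hcard2 : ({w, u} : Finset V).card = 2 := Finset.card_pair (G.ne_of_adj h'.symm)
          have hcard3 : ({w, u, p'.getVert 1} : Finset V).card ≤ 3 :=
            (Finset.card_insert_le _ _).trans (by
              simpa using Nat.add_le_add_right (Finset.card_insert_le u {p'.getVert 1}) 1)
          omega
        · intro a ha z hz
          simp only [Finset.mem_insert, Finset.mem_singleton] at ha
          rcases ha with rfl | rfl
          · rcases hw_nb z hz with rfl | rfl <;> simp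
          · have := hu_leaf z hz; simp [this]
        · intro a ha w₁ h₁ w₂ h₂ hadj₁ hadj₂
          simp only [Finset.mem_insert, Finset.mem_singleton] at ha h₁ h₂
          rcases ha with rfl | rfl
          · -- a = w : neighbors in {w,u} must be u
            have e₁ : w₁ = u := by
              rcases h₁ with rfl | rfl
              · exact absurd hadj₁ (G.irrefl)
              · rfl
            have e₂ : w₂ = u := by
              rcases h₂ with rfl | rfl
              · exact absurd hadj₂ (G.irrefl)
              · rfl
            rw [e₁, e₂]
          · -- a = u : neighbors are = w
            have e₁ : w₁ = w := hu_leaf w₁ hadj₁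
            have e₂ : w₂ = w := hu_leaf w₂ hadj₂
            rw [e₁, e₂]

universe u

private lemma main_aux (n : ℕ) : ∀ (V : Type u) [Fintype V] (G : SimpleGraph V),
    G.IsAcyclic → Fintype.card V = n →
    ∃ S : Finset V, IsDissocSet G S ∧ 2 * Fintype.card V ≤ 3 * S.card := by
  induction n using Nat.strong_induction_on with
  | _ n IH =>
    intro V _ G hG hcard
    classical
    rcases isEmpty_or_nonempty V with hV | hV
    · refine ⟨∅, fun v hv => by simp at hv, ?_⟩
      simp [Fintype.card_eq_zero]
    · obtain ⟨A, D, hDA, hcards, hAne, hclose, huniq⟩ := exists_AD hG hV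
      let G' : SimpleGraph {x : V // x ∉ A} := G.comap (Function.Embedding.subtype fun x => x ∉ A)
      have hG' : G'.IsAcyclic := by
        intro x c hc
        exact hG _ (hc.map
          (f := (SimpleGraph.Embedding.comap (Function.Embedding.subtype fun x => x ∉ A) G).toHom)
          Subtype.val_injective)
      have hcardV' : Fintype.card {x : V // x ∉ A} = n - A.card := by
        rw [Fintype.card_subtype_compl, hcard]
        congr 1
        exact Fintype.card_coe A
      have ha1 : 1 ≤ A.card := Finset.card_pos.2 hAne
      have han : A.card ≤ n := hcard ▸ Finset.card_le_univ A
      obtain ⟨S', hS'd, hS'c⟩ := IH (n - A.card) (by omega) _ G' hG' hcardV'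
      set Simg : Finset V := S'.image Subtype.val with hSimg
      have himgA : ∀ x ∈ Simg, x ∉ A := by
        intro x hx
        obtain ⟨x', _, rfl⟩ := Finset.mem_image.1 hx
        exact x'.2
      have hdisj : Disjoint Simg D := by
        rw [Finset.disjoint_left]
        intro x hx hxD
        exact himgA x hx (hDA hxD)
      refine ⟨Simg ∪ D, ?_, ?_⟩
      · intro v hv
        rw [Finset.mem_union] at hv
        rcases hv with hv | hv
        · obtain ⟨v', hv', rfl⟩ := Finset.mem_image.1 hv
          have hset : {u | u ∈ Simg ∪ D ∧ G.Adj ↑v' u} =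
              Subtype.val '' {u' | u' ∈ S' ∧ G'.Adj v' u'} := by
            ext x
            constructor
            · rintro ⟨hxS, hadj⟩
              rw [Finset.mem_union] at hxS
              rcases hxS with hxS | hxD
              · obtain ⟨x', hx', rfl⟩ := Finset.mem_image.1 hxS
                exact ⟨x', ⟨hx', by simpa [G'] using hadj⟩, rfl⟩
              · exact absurd (hclose x hxD _ hadj.symm) v'.2
            · rintro ⟨x', ⟨hx', hadj⟩, rfl⟩
              refine ⟨Finset.mem_union_left _ (Finset.mem_image_of_mem _ hx'), ?_⟩
              simpa [G'] using hadj
          rw [hset, Set.ncard_image_of_injective _ Subtype.val_injective]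
          exact hS'd v' hv'
        · apply ncard_le_one_of_subsingleton
          rintro a ⟨haS, hadja⟩ b ⟨hbS, hadjb⟩
          have haD : a ∈ D := by
            rw [Finset.mem_union] at haS
            rcases haS with haS | haS
            · exact absurd (hclose v hv a hadja) (himgA a haS)
            · exact haS
          have hbD : b ∈ D := by
            rw [Finset.mem_union] at hbS
            rcases hbS with hbS | hbS
            · exact absurd (hclose v hv b hadjb) (himgA b hbS)
            · exact hbS
          exact huniq v hv a haD b hbD hadja hadjb
      · rw [Finset.card_union_of_disjoint hdisj, hSimg,
          Finset.card_image_of_injective _ Subtype.val_injective, hcard]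
        rw [hcardV'] at hS'c
        omega

theorem stmt8 {V : Type*} [Fintype V] (T : SimpleGraph V) (h : T.IsTree) :
    ⌈(2 * Fintype.card V : ℚ) / 3⌉₊ ≤ dissocNum T := by
  classical
  obtain ⟨S, hSd, hSc⟩ := main_aux (Fintype.card V) V T h.2 rfl
  have hbdd : BddAbove {k | ∃ S : Finset V, IsDissocSet T S ∧ S.card = k} := by
    refine ⟨Fintype.card V, ?_⟩
    rintro k ⟨S, -, rfl⟩
    exact Finset.card_le_univ S
  have hle : S.card ≤ dissocNum T := le_csSup hbdd ⟨S, hSd, rfl⟩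
  rw [Nat.ceil_le, div_le_iff₀ (by norm_num : (0:ℚ) < 3)]
  have h2 : 2 * Fintype.card V ≤ dissocNum T * 3 := by omega
  exact_mod_cast h2
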